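/- arXiv:2305.05720 — 3 statements merged into one kernel-verified Lean document; each statement's English description precedes it below -/
import Mathlib

section
/- Let Ω = Ω₁ × Ω₂ with dim Ω₂ = j ≥ 3. Then there exists a constant C_j, depending only on j, such that for every u ∈ H¹_s(Ω) and every x = (x₁, x₂) ∈ Ω, |u(x)| ≤ (C_j / ‖x₂‖^{(j−2)/2}) · (∫_{Ω₂} |∇u(x₁, y)|² dy)^{1/2}. -/
open MeasureTheory Metric Bornology

noncomputable section

/-- `E n` is Euclidean space `ℝ^n`. -/
abbrev E (n : ℕ) : Type := EuclideanSpace ℝ (Fin n)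

/-- The norm of the derivative of a function radially symmetric in the second
variable is itself radially symmetric in the second variable. -/
lemma wang_fderiv_radial {m j : ℕ} {u : E m × E j → ℝ} (hu : ContDiff ℝ 1 u)
    (hsym : ∀ (x₁ : E m) (x₂ y₂ : E j), ‖x₂‖ = ‖y₂‖ → u (x₁, x₂) = u (x₁, y₂))
    (x₁ : E m) {y z : E j} (h : ‖y‖ = ‖z‖) :
    ‖fderiv ℝ u (x₁, y)‖ = ‖fderiv ℝ u (x₁, z)‖ := by
  rcases eq_or_ne y z with rfl | hyz
  · rfl
  · set Q : E j ≃ₗᵢ[ℝ] E j := Submodule.reflection (ℝ ∙ (y - z))ᗮ with hQ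
    have hQy : Q y = z := Submodule.reflection_sub h
    set T : (E m × E j) ≃ₗᵢ[ℝ] (E m × E j) :=
      { toLinearEquiv := (LinearEquiv.refl ℝ (E m)).prodCongr Q.toLinearEquiv
        norm_map' := fun p => by
          simp [Prod.norm_def, Q.norm_map] } with hT
    have hTapp : ∀ p : E m × E j, T p = (p.1, Q p.2) := fun p => rfl
    have huT : u ∘ T = u := by
      funext p
      exact hsym p.1 (Q p.2) p.2 (Q.norm_map p.2)
    have hd : ∀ p, HasFDerivAt u (fderiv ℝ u p) p :=
      fun p => (hu.differentiable one_ne_zero p).hasFDerivAt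
    have key : ∀ p : E m × E j, fderiv ℝ u p
        = (fderiv ℝ u (T p)).comp T.toLinearIsometry.toContinuousLinearMap := by
      intro p
      have h1 : HasFDerivAt (u ∘ T)
          ((fderiv ℝ u (T p)).comp T.toLinearIsometry.toContinuousLinearMap) p := by
        have h2 := (hd (T p)).comp p T.toContinuousLinearEquiv.hasFDerivAt
        exact h2
      rw [huT] at h1
      exact h1.fderiv
    have := key (x₁, y)
    rw [this, show T.toLinearIsometry.toContinuousLinearMap = ((T.toContinuousLinearEquiv : (E m × E j) →L[ℝ] (E m × E j))) from rfl,
      ContinuousLinearMap.opNorm_comp_linearIsometryEquiv]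
    congr 2
    rw [hTapp]
    simp [hQy]

/-- Wang's pointwise estimate for functions radially symmetric in the second
variable, case `dim Ω₂ = j ≥ 3`. Membership in `H¹_s(Ω)` is expressed for the dense
class of `C¹` functions with compact support contained in `Ω = Ω₁ × Ω₂`. -/
theorem wang_pointwise_estimate_j_ge_three (m j : ℕ) (hj : 3 ≤ j) :
    ∃ C > 0, ∀ (Ω₁ : Set (E m)), IsOpen Ω₁ → IsBounded Ω₁ →
      ∀ R : ℝ, 0 < R →
      ∀ u : E m × E j → ℝ,
        ContDiff ℝ 1 u → HasCompactSupport u →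
        tsupport u ⊆ Ω₁ ×ˢ ball (0 : E j) R →
        (∀ (x₁ : E m) (x₂ y₂ : E j), ‖x₂‖ = ‖y₂‖ → u (x₁, x₂) = u (x₁, y₂)) →
        ∀ (x₁ : E m) (x₂ : E j), (x₁, x₂) ∈ Ω₁ ×ˢ ball (0 : E j) R → x₂ ≠ 0 →
          |u (x₁, x₂)| ≤ C / ‖x₂‖ ^ (((j : ℝ) - 2) / 2) *
            (∫ y in ball (0 : E j) R, ‖fderiv ℝ u (x₁, y)‖ ^ 2) ^ ((1 : ℝ) / 2) := by
  haveI : Nontrivial (E j) :=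
    ⟨⟨EuclideanSpace.single ⟨0, by omega⟩ (1:ℝ), 0, by
      intro h
      have := congrArg (fun v : E j => v ⟨0, by omega⟩) h
      simp [EuclideanSpace.single_apply] at this⟩⟩
  set V : ℝ := (volume (ball (0 : E j) 1)).toReal with hVdef
  have hV : 0 < V :=
    ENNReal.toReal_pos (measure_ball_pos volume _ one_pos).ne' measure_ball_lt_top.ne
  have hj2 : (0:ℝ) < (j:ℝ) - 2 := by
    have : (3:ℝ) ≤ (j:ℝ) := by exact_mod_cast hj
    linarith
  have hjpos : (0:ℝ) < (j:ℝ) := by linarith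
  refine ⟨(Real.sqrt (((j:ℝ) - 2) * ((j:ℝ) * V)))⁻¹, by positivity, ?_⟩
  intro Ω₁ hΩo hΩb R hR u hu hcs hsupp hsym x₁ x₂ hmem hx2
  set r : ℝ := ‖x₂‖ with hrdef
  have hr : 0 < r := norm_pos_iff.mpr hx2
  have hrR : r < R := by
    have := hmem.2
    rwa [mem_ball_zero_iff] at this
  set ω : E j := r⁻¹ • x₂ with hωdef
  have hω : ‖ω‖ = 1 := by
    rw [hωdef, norm_smul, norm_inv, Real.norm_eq_abs, abs_of_pos hr, ← hrdef,
      inv_mul_cancel₀ hr.ne']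
  have hsω : ∀ s : ℝ, ‖s • ω‖ = |s| := by
    intro s; rw [norm_smul, hω, Real.norm_eq_abs, mul_one]
  have hxω : r • ω = x₂ := smul_inv_smul₀ hr.ne' x₂
  -- the radial slice and its derivative
  set g : ℝ → ℝ := fun s => u (x₁, s • ω) with hgdef
  set g' : ℝ → ℝ := fun s => fderiv ℝ u (x₁, s • ω) (0, ω) with hg'def
  have hd : ∀ p, HasFDerivAt u (fderiv ℝ u p) p :=
    fun p => (hu.differentiable one_ne_zero p).hasFDerivAt
  have hγ : ∀ s : ℝ, HasDerivAt (fun t : ℝ => ((x₁ : E m), t • ω)) (0, ω) s := by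
    intro s
    simpa using (hasDerivAt_const s x₁).prodMk ((hasDerivAt_id s).smul_const ω)
  have hg'at : ∀ s : ℝ, HasDerivAt g (g' s) s := by
    intro s
    exact (hd (x₁, s • ω)).comp_hasDerivAt s (hγ s)
  have hfc : Continuous (fun p : E m × E j => fderiv ℝ u p) := hu.continuous_fderiv one_ne_zero
  have hpathc : Continuous (fun s : ℝ => ((x₁ : E m), s • ω)) :=
    continuous_const.prodMk (continuous_id.smul continuous_const)
  have hFc : Continuous (fun s : ℝ => ‖fderiv ℝ u (x₁, s • ω)‖) :=
    (hfc.comp hpathc).norm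
  set F : ℝ → ℝ := fun s => ‖fderiv ℝ u (x₁, s • ω)‖ with hFdef
  have hg'c : Continuous g' := by
    exact (ContinuousLinearMap.apply ℝ ℝ ((0 : E m), ω)).continuous.comp (hfc.comp hpathc)
  have hg'le : ∀ s : ℝ, |g' s| ≤ F s := by
    intro s
    have h1 : ‖((0 : E m), ω)‖ = 1 := by
      rw [Prod.norm_def]; simp [hω]
    calc |g' s| = ‖fderiv ℝ u (x₁, s • ω) ((0 : E m), ω)‖ := rfl
      _ ≤ ‖fderiv ℝ u (x₁, s • ω)‖ * ‖((0 : E m), ω)‖ :=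
          ContinuousLinearMap.le_opNorm _ _
      _ = F s := by rw [h1, mul_one]
  -- F vanishes beyond R
  have hFzero : ∀ s : ℝ, R ≤ s → F s = 0 := by
    intro s hs
    have hns : (x₁, s • ω) ∉ tsupport u := by
      intro hmem'
      have := hsupp hmem'
      have h2 : s • ω ∈ ball (0 : E j) R := this.2
      rw [mem_ball_zero_iff, hsω, abs_of_nonneg (hR.le.trans hs)] at h2
      linarith
    have : fderiv ℝ u (x₁, s • ω) = 0 := by
      by_contra h
      exact hns (support_fderiv_subset (𝕜 := ℝ) (Function.mem_support.mpr h))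
    simp [hFdef, this]
  -- FTC: |u (x₁, x₂)| ≤ ∫ |g'| over (r, R]
  have hgR : g R = 0 := by
    show u (x₁, R • ω) = 0
    apply image_eq_zero_of_notMem_tsupport
    intro hmem'
    have := (hsupp hmem').2
    rw [mem_ball_zero_iff, hsω, abs_of_pos hR] at this
    exact lt_irrefl R this
  have hFTC : ∫ s in r..R, g' s = g R - g r :=
    intervalIntegral.integral_eq_sub_of_hasDerivAt (fun s _ => hg'at s)
      (hg'c.intervalIntegrable r R)
  have hstep1 : |u (x₁, x₂)| ≤ ∫ s in Set.Ioc r R, |g' s| := by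
    have hur : u (x₁, x₂) = g r := by rw [hgdef]; simp [hxω]
    have : |u (x₁, x₂)| = |∫ s in r..R, g' s| := by
      rw [hFTC, hgR, hur]; rw [zero_sub, abs_neg]
    rw [this]
    calc |∫ s in r..R, g' s| ≤ ∫ s in r..R, |g' s| :=
          intervalIntegral.abs_integral_le_integral_abs hrR.le
      _ = ∫ s in Set.Ioc r R, |g' s| := intervalIntegral.integral_of_le hrR.le
  -- Hölder's inequality setup
  set μ : Measure ℝ := volume.restrict (Set.Ioc r R) with hμdef
  haveI : IsFiniteMeasure μ := ⟨by
    rw [hμdef, Measure.restrict_apply_univ]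
    exact measure_Ioc_lt_top⟩
  set a : ℝ → ℝ := fun s => s ^ ((1 - (j:ℝ)) / 2) with hadef
  set b : ℝ → ℝ := fun s => s ^ (((j:ℝ) - 1) / 2) * |g' s| with hbdef
  have haIoc : ∀ s ∈ Set.Ioc r R, 0 < s := fun s hs => hr.trans hs.1
  have hμmem : ∀ᵐ s ∂μ, s ∈ Set.Ioc r R := ae_restrict_mem measurableSet_Ioc
  have ha_nonneg : 0 ≤ᵐ[μ] a := by
    filter_upwards [hμmem] with s hs
    exact Real.rpow_nonneg (haIoc s hs).le _
  have hb_nonneg : 0 ≤ᵐ[μ] b := by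
    filter_upwards [hμmem] with s hs
    exact mul_nonneg (Real.rpow_nonneg (haIoc s hs).le _) (abs_nonneg _)
  have haCont : ContinuousOn a (Set.Ioc r R) := fun s hs =>
    (Real.continuousAt_rpow_const s _ (Or.inl (haIoc s hs).ne')).continuousWithinAt
  have hbC : Continuous b :=
    (Real.continuous_rpow_const (by linarith)).mul hg'c.abs
  have haM : MemLp a (ENNReal.ofReal 2) μ := by
    apply MemLp.of_bound (haCont.aestronglyMeasurable measurableSet_Ioc)
      (r ^ ((1 - (j:ℝ)) / 2))
    filter_upwards [hμmem] with s hs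
    rw [Real.norm_eq_abs, abs_of_nonneg (Real.rpow_nonneg (haIoc s hs).le _)]
    exact Real.rpow_le_rpow_of_nonpos hr hs.1.le (by linarith)
  obtain ⟨M, hM⟩ := (isCompact_Icc (a := r) (b := R)).exists_bound_of_continuousOn
    hbC.continuousOn
  have hbM : MemLp b (ENNReal.ofReal 2) μ := by
    apply MemLp.of_bound hbC.aestronglyMeasurable.restrict M
    filter_upwards [hμmem] with s hs
    exact hM s (Set.Ioc_subset_Icc_self hs)
  have hpq : Real.HolderConjugate 2 2 := Real.HolderConjugate.two_two
  have hHolder := integral_mul_le_Lp_mul_Lq_of_nonneg hpq ha_nonneg hb_nonneg haM hbM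
  have hab : ∫ s in Set.Ioc r R, |g' s| = ∫ s, a s * b s ∂μ := by
    rw [hμdef]
    apply setIntegral_congr_fun measurableSet_Ioc
    intro s hs
    have hs0 := haIoc s hs
    show |g' s| = a s * b s
    rw [hadef, hbdef, ← mul_assoc, ← Real.rpow_add hs0,
      show (1 - (j:ℝ))/2 + ((j:ℝ) - 1)/2 = 0 by ring, Real.rpow_zero, one_mul]
  set A := ∫ s, a s ^ (2:ℝ) ∂μ with hAdef
  set B := ∫ s, b s ^ (2:ℝ) ∂μ with hBdef
  have hA0 : 0 ≤ A := by
    apply integral_nonneg_of_ae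
    filter_upwards [hμmem] with s hs
    exact Real.rpow_nonneg (Real.rpow_nonneg (haIoc s hs).le _) _
  have hB0 : 0 ≤ B := by
    apply integral_nonneg_of_ae
    filter_upwards [hμmem] with s hs
    exact Real.rpow_nonneg (mul_nonneg (Real.rpow_nonneg (haIoc s hs).le _) (abs_nonneg _)) _
  have hAle : A ≤ r ^ ((2:ℝ) - j) / ((j:ℝ) - 2) := by
    have h1 : A = ∫ s in Set.Ioc r R, s ^ ((1:ℝ) - j) := by
      rw [hAdef, hμdef]
      apply setIntegral_congr_fun measurableSet_Ioc
      intro s hs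
      show a s ^ (2:ℝ) = s ^ ((1:ℝ) - j)
      rw [hadef, ← Real.rpow_mul (haIoc s hs).le]
      congr 1
      ring
    have h2 : ∫ s in Set.Ioc r R, s ^ ((1:ℝ) - j) ≤ ∫ s in Set.Ioi r, s ^ ((1:ℝ) - j) := by
      apply setIntegral_mono_set (integrableOn_Ioi_rpow_of_lt (by linarith) hr)
      · filter_upwards [ae_restrict_mem measurableSet_Ioi] with s hs
        exact Real.rpow_nonneg (le_of_lt (hr.trans hs)) _
      · exact HasSubset.Subset.eventuallyLE Set.Ioc_subset_Ioi_self
    have h3 : ∫ s in Set.Ioi r, s ^ ((1:ℝ) - j) = -r ^ (((1:ℝ) - j) + 1) / (((1:ℝ) - j) + 1) :=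
      integral_Ioi_rpow_of_lt (by linarith) hr
    have h4 : -r ^ (((1:ℝ) - j) + 1) / (((1:ℝ) - j) + 1) = r ^ ((2:ℝ) - j) / ((j:ℝ) - 2) := by
      rw [show ((1:ℝ) - j) + 1 = (2:ℝ) - j by ring]
      have hne : (2:ℝ) - j ≠ 0 := by linarith
      have hne2 : (j:ℝ) - 2 ≠ 0 := hj2.ne'
      field_simp
      ring
    rw [h1]
    rw [h3, h4] at h2
    exact h2
  -- the radial profile of the squared gradient
  set Φ : ℝ → ℝ := fun s => s ^ ((j:ℝ) - 1) * F s ^ 2 with hΦdef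
  have hΦc : Continuous Φ :=
    (Real.continuous_rpow_const (by linarith)).mul (hFc.pow 2)
  have hΦint : IntegrableOn Φ (Set.Ioi 0) volume := by
    have h1 : IntegrableOn Φ (Set.Ioc 0 R) volume :=
      (hΦc.continuousOn.integrableOn_compact isCompact_Icc).mono_set Set.Ioc_subset_Icc_self
    have h2 : IntegrableOn Φ (Set.Ioi R) volume := by
      have he : Set.EqOn (fun _ : ℝ => (0:ℝ)) Φ (Set.Ioi R) := by
        intro s hs
        simp only [hΦdef]
        rw [hFzero s (le_of_lt hs)]
        ring
      exact (integrableOn_zero).congr_fun he measurableSet_Ioi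
    have hsub : Set.Ioi (0:ℝ) ⊆ Set.Ioc 0 R ∪ Set.Ioi R := by
      intro s hs
      by_cases h : s ≤ R
      · exact Or.inl ⟨hs, h⟩
      · exact Or.inr (lt_of_not_ge h)
    exact (h1.union h2).mono_set hsub
  have hΦI0 : 0 ≤ ∫ s in Set.Ioi (0:ℝ), Φ s := by
    apply setIntegral_nonneg measurableSet_Ioi
    intro s hs
    exact mul_nonneg (Real.rpow_nonneg (le_of_lt hs) _) (sq_nonneg _)
  have hBle : B ≤ ∫ s in Set.Ioi (0:ℝ), Φ s := by
    have h1 : B = ∫ s in Set.Ioc r R, s ^ ((j:ℝ) - 1) * g' s ^ 2 := by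
      rw [hBdef, hμdef]
      apply setIntegral_congr_fun measurableSet_Ioc
      intro s hs
      have hs0 := haIoc s hs
      show b s ^ (2:ℝ) = s ^ ((j:ℝ) - 1) * g' s ^ 2
      rw [hbdef, Real.mul_rpow (Real.rpow_nonneg hs0.le _) (abs_nonneg _),
        ← Real.rpow_mul hs0.le,
        show (((j:ℝ) - 1)/2) * 2 = (j:ℝ) - 1 by ring,
        show (2:ℝ) = ((2:ℕ):ℝ) by norm_num, Real.rpow_natCast, sq_abs]
    have hΨc : Continuous (fun s : ℝ => s ^ ((j:ℝ) - 1) * g' s ^ 2) :=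
      (Real.continuous_rpow_const (by linarith)).mul (hg'c.pow 2)
    have hsub2 : Set.Ioc r R ⊆ Set.Ioi (0:ℝ) :=
      fun s hs => hr.trans hs.1
    have h2 : ∫ s in Set.Ioc r R, s ^ ((j:ℝ) - 1) * g' s ^ 2 ≤ ∫ s in Set.Ioc r R, Φ s := by
      apply setIntegral_mono_on
        ((hΨc.continuousOn.integrableOn_compact isCompact_Icc).mono_set Set.Ioc_subset_Icc_self)
        (hΦint.mono_set hsub2) measurableSet_Ioc
      intro s hs
      have h3 : g' s ^ 2 ≤ F s ^ 2 := by
        have h4 := pow_le_pow_left₀ (abs_nonneg (g' s)) (hg'le s) 2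
        rwa [sq_abs] at h4
      exact mul_le_mul_of_nonneg_left h3 (Real.rpow_nonneg (haIoc s hs).le _)
    have h5 : ∫ s in Set.Ioc r R, Φ s ≤ ∫ s in Set.Ioi (0:ℝ), Φ s := by
      apply setIntegral_mono_set hΦint
      · filter_upwards [ae_restrict_mem measurableSet_Ioi] with s hs
        exact mul_nonneg (Real.rpow_nonneg (le_of_lt hs) _) (sq_nonneg _)
      · exact HasSubset.Subset.eventuallyLE hsub2
    rw [h1]
    exact h2.trans h5
  -- spherical coordinates identity
  set IB := ∫ y in ball (0 : E j) R, ‖fderiv ℝ u (x₁, y)‖ ^ 2 with hIBdef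
  have hIB : IB = ((j:ℝ) * V) * ∫ s in Set.Ioi (0:ℝ), Φ s := by
    have h0 : IB = ∫ y : E j, ‖fderiv ℝ u (x₁, y)‖ ^ 2 := by
      rw [hIBdef]
      apply setIntegral_eq_integral_of_forall_compl_eq_zero
      intro y hy
      have hns : (x₁, y) ∉ tsupport u := fun hmem' => hy (hsupp hmem').2
      have hz : fderiv ℝ u (x₁, y) = 0 := by
        by_contra h
        exact hns (support_fderiv_subset (𝕜 := ℝ) (Function.mem_support.mpr h))
      simp [hz]
    have h1 : ∀ y : E j, ‖fderiv ℝ u (x₁, y)‖ ^ 2 = (fun t : ℝ => F t ^ 2) ‖y‖ := by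
      intro y
      have hnorm : ‖y‖ = ‖(‖y‖ : ℝ) • ω‖ := by
        rw [hsω, abs_of_nonneg (norm_nonneg y)]
      simp only [hFdef]
      rw [wang_fderiv_radial hu hsym x₁ hnorm]
    have h2 := MeasureTheory.integral_fun_norm_addHaar (volume : Measure (E j))
      (fun t : ℝ => F t ^ 2)
    rw [finrank_euclideanSpace_fin] at h2
    have h3 : ∫ y in Set.Ioi (0:ℝ), y ^ (j - 1) • F y ^ 2 = ∫ s in Set.Ioi (0:ℝ), Φ s := by
      apply setIntegral_congr_fun measurableSet_Ioi
      intro s hs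
      show s ^ (j - 1) • F s ^ 2 = Φ s
      have hc : s ^ (j - 1) = s ^ ((j:ℝ) - 1) := by
        rw [← Real.rpow_natCast s (j - 1), Nat.cast_sub (by omega : 1 ≤ j), Nat.cast_one]
      show s ^ (j - 1) • F s ^ 2 = s ^ ((j:ℝ) - 1) * F s ^ 2
      rw [smul_eq_mul, hc]
    have h1' : (fun y : E j => ‖fderiv ℝ u (x₁, y)‖ ^ 2) = fun y : E j => F ‖y‖ ^ 2 :=
      funext h1
    rw [h0, h1', h2, h3, nsmul_eq_mul, smul_eq_mul, measureReal_def, ← hVdef, mul_assoc]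
  have hIB0 : 0 ≤ IB := by
    rw [hIB]
    exact mul_nonneg (by positivity) hΦI0
  have hBle' : B ≤ IB / ((j:ℝ) * V) := by
    rw [hIB, mul_comm, mul_div_assoc, div_self (by positivity : ((j:ℝ) * V) ≠ 0), mul_one]
    exact hBle
  -- combine
  have hfinal : |u (x₁, x₂)| ≤ A ^ ((1:ℝ)/2) * B ^ ((1:ℝ)/2) := by
    calc |u (x₁, x₂)| ≤ ∫ s in Set.Ioc r R, |g' s| := hstep1
      _ = ∫ s, a s * b s ∂μ := hab
      _ ≤ A ^ ((1:ℝ)/2) * B ^ ((1:ℝ)/2) := hHolder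
  have hA12 : A ^ ((1:ℝ)/2) ≤ (r ^ ((2:ℝ) - j) / ((j:ℝ) - 2)) ^ ((1:ℝ)/2) :=
    Real.rpow_le_rpow hA0 hAle (by norm_num)
  have hB12 : B ^ ((1:ℝ)/2) ≤ (IB / ((j:ℝ) * V)) ^ ((1:ℝ)/2) :=
    Real.rpow_le_rpow hB0 hBle' (by norm_num)
  have hmul : |u (x₁, x₂)| ≤
      (r ^ ((2:ℝ) - j) / ((j:ℝ) - 2)) ^ ((1:ℝ)/2) * (IB / ((j:ℝ) * V)) ^ ((1:ℝ)/2) :=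
    hfinal.trans (mul_le_mul hA12 hB12 (Real.rpow_nonneg hB0 _)
      (Real.rpow_nonneg (by positivity) _))
  have heq : (r ^ ((2:ℝ) - j) / ((j:ℝ) - 2)) ^ ((1:ℝ)/2) * (IB / ((j:ℝ) * V)) ^ ((1:ℝ)/2)
      = (Real.sqrt (((j:ℝ) - 2) * ((j:ℝ) * V)))⁻¹ / r ^ (((j:ℝ) - 2)/2) * IB ^ ((1:ℝ)/2) := by
    rw [Real.div_rpow (Real.rpow_nonneg hr.le _) hj2.le,
      Real.div_rpow hIB0 (by positivity),
      ← Real.rpow_mul hr.le,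
      show ((2:ℝ) - j) * ((1:ℝ)/2) = -(((j:ℝ) - 2)/2) by ring,
      Real.rpow_neg hr.le,
      Real.sqrt_eq_rpow, Real.mul_rpow hj2.le (by positivity)]
    rw [div_mul_div_comm]
    ring
  rw [heq] at hmul
  exact hmul
end
end

section
/- Let Ω = Ω₁ × Ω₂ with dim Ω₂ = j = 2. Then there exists a constant A_j such that for every u ∈ H¹₀(Ω) radially symmetric in the second variable and every x = (x₁, x₂) ∈ Ω, |u(x)| ≤ (A_j / ‖x₂‖^{j−1}) ∫_{Ω₂} |∇u(x₁, y)| dy. -/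
open MeasureTheory Metric Bornology

noncomputable section

/-- Auxiliary measurable equivalence `ℝ × ℝ ≃ᵐ E 2`, sending `(b, t)` to the euclidean
vector with coordinates `(t, b)`. -/
def wangT : ℝ × ℝ ≃ᵐ E 2 :=
  MeasurableEquiv.prodComm.trans ((MeasurableEquiv.finTwoArrow).symm.trans
    (MeasurableEquiv.toLp 2 (Fin 2 → ℝ)))

lemma wangT_measurePreserving : MeasurePreserving (wangT : ℝ × ℝ → E 2) := by
  have h1 : MeasurePreserving (Prod.swap : ℝ × ℝ → ℝ × ℝ) volume volume := by
    rw [Measure.volume_eq_prod]; exact Measure.measurePreserving_swap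
  have h2 := (volume_preserving_finTwoArrow ℝ).symm
  have h3 := (EuclideanSpace.volume_preserving_symm_measurableEquiv_toLp (Fin 2)).symm
  exact h3.comp (h2.comp h1)

/-- `wangPt t b` is the euclidean vector `(t, b)`. -/
def wangPt (t b : ℝ) : E 2 :=
  t • (EuclideanSpace.single 0 1 : E 2) + b • EuclideanSpace.single 1 1

lemma wangT_apply (b t : ℝ) : wangT (b, t) = wangPt t b := by
  ext i
  fin_cases i <;>
    simp [wangT, wangPt, MeasurableEquiv.finTwoArrow, MeasurableEquiv.prodComm,
      EuclideanSpace.single_apply, MeasurableEquiv.coe_toLp]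

lemma wangPt_norm (t b : ℝ) : ‖wangPt t b‖ = Real.sqrt (t ^ 2 + b ^ 2) := by
  rw [wangPt, EuclideanSpace.norm_eq]
  simp [Fin.sum_univ_two, EuclideanSpace.single_apply, sq_abs]

lemma wangPt_continuous : Continuous fun p : ℝ × ℝ => wangPt p.2 p.1 := by
  unfold wangPt; fun_prop

/-- Wang's pointwise estimate in the case `dim Ω₂ = j = 2`: for `u ∈ H¹₀(Ω)` radially
symmetric in the second variable (expressed for the dense class of `C¹` functions with
compact support in `Ω = Ω₁ × Ω₂`), `|u(x)| ≤ (A_j/‖x₂‖^{j-1}) ∫_{Ω₂} |∇u(x₁,y)| dy`. -/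
theorem wang_pointwise_estimate_j_eq_two (m : ℕ) :
    ∃ A > 0, ∀ (Ω₁ : Set (E m)), IsOpen Ω₁ → IsBounded Ω₁ →
      ∀ R : ℝ, 0 < R →
      ∀ u : E m × E 2 → ℝ,
        ContDiff ℝ 1 u → HasCompactSupport u →
        tsupport u ⊆ Ω₁ ×ˢ ball (0 : E 2) R →
        (∀ (x₁ : E m) (x₂ y₂ : E 2), ‖x₂‖ = ‖y₂‖ → u (x₁, x₂) = u (x₁, y₂)) →
        ∀ (x₁ : E m) (x₂ : E 2), (x₁, x₂) ∈ Ω₁ ×ˢ ball (0 : E 2) R → x₂ ≠ 0 →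
          |u (x₁, x₂)| ≤ A / ‖x₂‖ ^ ((2 : ℝ) - 1) *
            ∫ y in ball (0 : E 2) R, ‖fderiv ℝ u (x₁, y)‖ := by
  refine ⟨2, by norm_num, ?_⟩
  intro Ω₁ hΩ₁open hΩ₁bdd R hR u hu hucs husupp hrad x₁ x₂ hxmem hx₂
  set r : ℝ := ‖x₂‖ with hr_def
  have hr : 0 < r := norm_pos_iff.mpr hx₂
  have hrR : r < R := by
    have := hxmem.2
    rwa [mem_ball, dist_zero_right] at this
  set c : ℝ := |u (x₁, x₂)| with hc_def
  set g : E 2 → ℝ := fun y => ‖fderiv ℝ u (x₁, y)‖ with hg_def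
  have hg_nonneg : ∀ y, 0 ≤ g y := fun y => norm_nonneg _
  have hfd_cont : Continuous (fderiv ℝ u) := hu.continuous_fderiv one_ne_zero
  have hg_cont : Continuous g :=
    (hfd_cont.comp (continuous_const.prodMk continuous_id)).norm
  -- g vanishes outside the ball of radius R
  have hg0 : ∀ y : E 2, R ≤ ‖y‖ → g y = 0 := by
    intro y hy
    have hnm : (x₁, y) ∉ tsupport u := by
      intro hmem
      have := (husupp hmem).2
      rw [mem_ball, dist_zero_right] at this
      linarith
    have : (x₁, y) ∉ Function.support (fderiv ℝ u) :=
      fun h => hnm (support_fderiv_subset ℝ h)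
    simp only [Function.mem_support, not_not] at this
    simp [hg_def, this]
  -- the function on ℝ × ℝ
  set f : ℝ × ℝ → ℝ := fun p => g (wangPt p.2 p.1) with hf_def
  have hf_cont : Continuous f := hg_cont.comp wangPt_continuous
  have hf_cs : HasCompactSupport f := by
    apply HasCompactSupport.intro (isCompact_closedBall (0 : ℝ × ℝ) R)
    intro p hp
    rw [mem_closedBall, dist_zero_right] at hp
    push_neg at hp
    have hnorm : R ≤ ‖wangPt p.2 p.1‖ := by
      rw [wangPt_norm]
      rcases le_max_iff.mp (le_of_lt hp : R ≤ max ‖p.1‖ ‖p.2‖) with h | h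
      · calc R ≤ ‖p.1‖ := h
          _ = Real.sqrt (p.1 ^ 2) := by rw [Real.sqrt_sq_eq_abs, Real.norm_eq_abs]
          _ ≤ Real.sqrt (p.2 ^ 2 + p.1 ^ 2) := by
              apply Real.sqrt_le_sqrt; nlinarith [sq_nonneg p.2]
      · calc R ≤ ‖p.2‖ := h
          _ = Real.sqrt (p.2 ^ 2) := by rw [Real.sqrt_sq_eq_abs, Real.norm_eq_abs]
          _ ≤ Real.sqrt (p.2 ^ 2 + p.1 ^ 2) := by
              apply Real.sqrt_le_sqrt; nlinarith [sq_nonneg p.1]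
    exact hg0 _ hnorm
  have hf_int : Integrable f := hf_cont.integrable_of_hasCompactSupport hf_cs
  -- step A: the one-dimensional estimate for each b ∈ (0, r/2]
  have stepA : ∀ b ∈ Set.Ioc (0 : ℝ) (r / 2), c ≤ ∫ t in Set.Ioc (0 : ℝ) R, f (b, t) := by
    intro b hb
    obtain ⟨hb0, hbr⟩ := hb
    set t₀ : ℝ := Real.sqrt (r ^ 2 - b ^ 2) with ht₀_def
    have hb_lt_r : b < r := lt_of_le_of_lt hbr (by linarith)
    have hsq_nonneg : (0 : ℝ) ≤ r ^ 2 - b ^ 2 := by nlinarith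
    have ht₀0 : 0 ≤ t₀ := Real.sqrt_nonneg _
    have ht₀r : t₀ ≤ r := by
      rw [ht₀_def]
      calc Real.sqrt (r ^ 2 - b ^ 2) ≤ Real.sqrt (r ^ 2) := by
            apply Real.sqrt_le_sqrt; nlinarith
        _ = r := by rw [Real.sqrt_sq hr.le]
    have ht₀R : t₀ ≤ R := ht₀r.trans hrR.le
    have hnorm_t₀ : ‖wangPt t₀ b‖ = r := by
      rw [wangPt_norm, ht₀_def, Real.sq_sqrt hsq_nonneg]
      rw [show r ^ 2 - b ^ 2 + b ^ 2 = r ^ 2 by ring, Real.sqrt_sq hr.le]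
    have huval : u (x₁, x₂) = u (x₁, wangPt t₀ b) := hrad x₁ x₂ _ hnorm_t₀.symm
    have huR : u (x₁, wangPt R b) = 0 := by
      apply image_eq_zero_of_notMem_tsupport
      intro hmem
      have h1 := (husupp hmem).2
      rw [mem_ball, dist_zero_right, wangPt_norm] at h1
      have h2 : Real.sqrt (R ^ 2) ≤ Real.sqrt (R ^ 2 + b ^ 2) := by
        apply Real.sqrt_le_sqrt; nlinarith
      rw [Real.sqrt_sq hR.le] at h2
      linarith
    -- FTC along the segment
    set ψ : ℝ → ℝ := fun t => u (x₁, wangPt t b) with hψ_def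
    set ψ' : ℝ → ℝ := fun t => fderiv ℝ u (x₁, wangPt t b)
      ((0 : E m), (EuclideanSpace.single 0 1 : E 2)) with hψ'_def
    have hγ : ∀ t : ℝ, HasDerivAt (fun s : ℝ => ((x₁ : E m), wangPt s b))
        ((0 : E m), (EuclideanSpace.single 0 1 : E 2)) t := by
      intro t
      have h2 : HasDerivAt (fun s : ℝ => wangPt s b)
          (EuclideanSpace.single 0 1 : E 2) t := by
        unfold wangPt
        simpa using ((hasDerivAt_id t).smul_const
          (EuclideanSpace.single 0 1 : E 2)).add_const (b • EuclideanSpace.single 1 1)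
      exact (hasDerivAt_const t x₁).prodMk h2
    have hderiv : ∀ t : ℝ, HasDerivAt ψ (ψ' t) t := by
      intro t
      exact ((hu.differentiable one_ne_zero) _).hasFDerivAt.comp_hasDerivAt t (hγ t)
    have hψ'_cont : Continuous ψ' := by
      apply Continuous.clm_apply _ continuous_const
      exact hfd_cont.comp (continuous_const.prodMk (by unfold wangPt; fun_prop))
    have hFTC : ∫ t in t₀..R, ψ' t = ψ R - ψ t₀ :=
      intervalIntegral.integral_eq_sub_of_hasDerivAt (fun t _ => hderiv t)
        (hψ'_cont.intervalIntegrable t₀ R)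
    have hψR : ψ R = 0 := huR
    have hψt₀ : ψ t₀ = u (x₁, x₂) := huval.symm
    have hbound : ∀ t : ℝ, ‖ψ' t‖ ≤ g (wangPt t b) := by
      intro t
      calc ‖ψ' t‖ ≤ ‖fderiv ℝ u (x₁, wangPt t b)‖ *
            ‖((0 : E m), (EuclideanSpace.single 0 1 : E 2))‖ :=
          ContinuousLinearMap.le_opNorm _ _
        _ = g (wangPt t b) := by
            rw [Prod.norm_def]
            simp [EuclideanSpace.norm_single, hg_def]
    have hce : c = |∫ t in t₀..R, ψ' t| := by
      rw [hFTC, hψR, hψt₀, hc_def, zero_sub, abs_neg]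
    have hgb_cont : Continuous fun t => g (wangPt t b) := by
      exact hg_cont.comp (by unfold wangPt; fun_prop)
    have h1 : c ≤ ∫ t in t₀..R, g (wangPt t b) := by
      rw [hce]
      calc |∫ t in t₀..R, ψ' t| ≤ ∫ t in t₀..R, ‖ψ' t‖ := by
            rw [← Real.norm_eq_abs]
            exact intervalIntegral.norm_integral_le_integral_norm ht₀R
        _ ≤ ∫ t in t₀..R, g (wangPt t b) := by
            apply intervalIntegral.integral_mono_on ht₀R
              (hψ'_cont.norm.intervalIntegrable _ _) (hgb_cont.intervalIntegrable _ _)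
            intro t _; exact hbound t
    have h2 : (∫ t in t₀..R, g (wangPt t b)) ≤ ∫ t in (0 : ℝ)..R, g (wangPt t b) := by
      have hsplit : (∫ t in (0:ℝ)..t₀, g (wangPt t b)) + ∫ t in t₀..R, g (wangPt t b)
          = ∫ t in (0:ℝ)..R, g (wangPt t b) :=
        intervalIntegral.integral_add_adjacent_intervals
          (hgb_cont.intervalIntegrable _ _) (hgb_cont.intervalIntegrable _ _)
      have hpos : 0 ≤ ∫ t in (0:ℝ)..t₀, g (wangPt t b) :=
        intervalIntegral.integral_nonneg ht₀0 (fun t _ => hg_nonneg _)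
      linarith
    have h3 : (∫ t in (0 : ℝ)..R, g (wangPt t b)) = ∫ t in Set.Ioc (0 : ℝ) R, f (b, t) := by
      rw [intervalIntegral.integral_of_le hR.le]
    linarith
  -- step B: integrate over b
  set S : Set (ℝ × ℝ) := Set.Ioc (0 : ℝ) (r / 2) ×ˢ Set.Ioc (0 : ℝ) R with hS_def
  have hfS : IntegrableOn f S := hf_int.integrableOn
  have hprod : ∫ p in S, f p = ∫ b in Set.Ioc (0 : ℝ) (r / 2),
      ∫ t in Set.Ioc (0 : ℝ) R, f (b, t) := by
    rw [hS_def, Measure.volume_eq_prod]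
    exact setIntegral_prod f (by rwa [← Measure.volume_eq_prod, ← hS_def])
  have hΦint : IntegrableOn (fun b => ∫ t in Set.Ioc (0 : ℝ) R, f (b, t))
      (Set.Ioc (0 : ℝ) (r / 2)) := by
    have h : Integrable f ((volume.restrict (Set.Ioc (0 : ℝ) (r / 2))).prod
        (volume.restrict (Set.Ioc (0 : ℝ) R))) := by
      rw [Measure.prod_restrict, ← Measure.volume_eq_prod]
      exact hfS
    exact h.integral_prod_left
  have hstep1 : c * (r / 2) ≤ ∫ p in S, f p := by
    have hconst : ∫ _ in Set.Ioc (0 : ℝ) (r / 2), c = c * (r / 2) := by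
      rw [setIntegral_const]
      rw [measureReal_def, Real.volume_Ioc]
      rw [ENNReal.toReal_ofReal (by linarith)]
      rw [smul_eq_mul, sub_zero, mul_comm]
    rw [hprod, ← hconst]
    exact setIntegral_mono_on ((integrableOn_const_iff).mpr (Or.inr (by
      rw [Real.volume_Ioc]; exact ENNReal.ofReal_lt_top))) hΦint measurableSet_Ioc stepA
  have hstep2 : (∫ p in S, f p) ≤ ∫ p, f p :=
    setIntegral_le_integral hf_int (Filter.Eventually.of_forall fun p => hg_nonneg _)
  have hstep3 : (∫ p, f p) = ∫ y, g y := by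
    have : (∫ p, f p) = ∫ p, g (wangT p) := by
      congr 1; funext p
      show g (wangPt p.2 p.1) = g (wangT p)
      rw [show wangT p = wangPt p.2 p.1 from wangT_apply p.1 p.2]
    rw [this]
    exact wangT_measurePreserving.integral_comp wangT.measurableEmbedding g
  have hstep4 : (∫ y, g y) = ∫ y in ball (0 : E 2) R, g y := by
    symm
    apply setIntegral_eq_integral_of_forall_compl_eq_zero
    intro y hy
    rw [mem_ball, dist_zero_right, not_lt] at hy
    exact hg0 y hy
  have hmain : c * (r / 2) ≤ ∫ y in ball (0 : E 2) R, g y := by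
    rw [← hstep4, ← hstep3]
    exact hstep1.trans hstep2
  have hI_nonneg : 0 ≤ ∫ y in ball (0 : E 2) R, g y :=
    setIntegral_nonneg measurableSet_ball fun y _ => hg_nonneg y
  have hexp : r ^ ((2 : ℝ) - 1) = r := by
    rw [show (2 : ℝ) - 1 = 1 by norm_num, Real.rpow_one]
  rw [hexp]
  have hfinal : c ≤ 2 / r * ∫ y in ball (0 : E 2) R, g y := by
    rw [div_mul_eq_mul_div, le_div_iff₀ hr]
    nlinarith
  exact hfinal
end
end

section
/- Let Ω = Ω₁ × Ω₂ with dim Ω₂ = j = 2 and let b > 1 be a real number. Then there exists a constant A_j such that for every u ∈ H¹₀(Ω) radially symmetric in the second variable and every x = (x₁, x₂) ∈ Ω, |u(x)|^b ≤ (b·A_j / ‖x₂‖^{j−1}) ∫_{Ω₂} |u(x₁, y)|^{b−1} |∇u(x₁, y)| dy. -/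
open MeasureTheory Metric Bornology
open Filter Topology Set

noncomputable section

lemma abs_D_eq {b : ℝ} (hb : 1 < b) (t : ℝ) :
    |b * |t| ^ (b - 2) * t| = b * |t| ^ (b - 1) := by
  rcases eq_or_ne t 0 with rfl | ht
  · simp [Real.zero_rpow (show b - 1 ≠ 0 by linarith)]
  · rw [abs_mul, abs_mul, abs_of_nonneg (show (0:ℝ) ≤ b by linarith),
      abs_of_nonneg (Real.rpow_nonneg (abs_nonneg t) _), mul_assoc,
      ← Real.rpow_add_one (abs_ne_zero.2 ht), show b - 2 + 1 = b - 1 by ring]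

/-- product of identity with a linear isometry equiv, as a linear isometry equiv -/
def prodLIE {F G : Type*} [NormedAddCommGroup F] [NormedSpace ℝ F]
    [NormedAddCommGroup G] [NormedSpace ℝ G] (ρ : G ≃ₗᵢ[ℝ] G) :
    (F × G) ≃ₗᵢ[ℝ] (F × G) where
  toLinearEquiv := (LinearEquiv.refl ℝ F).prodCongr ρ.toLinearEquiv
  norm_map' := fun p => by
    simp [Prod.norm_def, ρ.norm_map]

lemma norm_fderiv_radial (m : ℕ) (u : E m × E 2 → ℝ) (hu : ContDiff ℝ 1 u)
    (hrad : ∀ (x₁ : E m) (x₂ y₂ : E 2), ‖x₂‖ = ‖y₂‖ → u (x₁, x₂) = u (x₁, y₂))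
    (x₁ : E m) {v w : E 2} (hvw : ‖v‖ = ‖w‖) :
    ‖fderiv ℝ u (x₁, v)‖ = ‖fderiv ℝ u (x₁, w)‖ := by
  rcases eq_or_ne v w with rfl | hne
  · rfl
  set ρ : E 2 ≃ₗᵢ[ℝ] E 2 := Submodule.reflection (ℝ ∙ (v - w))ᗮ with hρdef
  have hρ : ρ v = w := Submodule.reflection_sub hvw
  set T : (E m × E 2) ≃ₗᵢ[ℝ] (E m × E 2) := prodLIE ρ with hT
  set Tclm := T.toLinearIsometry.toContinuousLinearMap with hTclm
  have hTapp : ∀ p : E m × E 2, Tclm p = (p.1, ρ p.2) := fun p => rfl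
  have hid : u ∘ Tclm = u := by
    funext p
    rw [Function.comp_apply, hTapp]
    exact hrad p.1 (ρ p.2) p.2 (ρ.norm_map p.2)
  have h1 : HasFDerivAt u (fderiv ℝ u (Tclm (x₁, v))) (Tclm (x₁, v)) :=
    ((hu.differentiable one_ne_zero) _).hasFDerivAt
  have h2 : HasFDerivAt (u ∘ Tclm) ((fderiv ℝ u (Tclm (x₁, v))).comp Tclm) (x₁, v) :=
    h1.comp _ Tclm.hasFDerivAt
  rw [hid] at h2
  have h3 : fderiv ℝ u (x₁, v) = (fderiv ℝ u (Tclm (x₁, v))).comp Tclm := h2.fderiv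
  have h4 : Tclm (x₁, v) = (x₁, w) := by rw [hTapp]; simp [hρ]
  rw [h3, h4]
  exact ContinuousLinearMap.opNorm_comp_linearIsometryEquiv _ T

/-- Wang's second pointwise estimate in the case `dim Ω₂ = j = 2`: for `b > 1` and
`u ∈ H¹₀(Ω)` radially symmetric in the second variable (expressed for the dense class of
`C¹` functions with compact support in `Ω = Ω₁ × Ω₂`),
`|u(x)|^b ≤ (b·A_j/‖x₂‖^{j-1}) ∫_{Ω₂} |u(x₁,y)|^{b-1} |∇u(x₁,y)| dy`. -/
theorem wang_pointwise_estimate_j_eq_two_power (m : ℕ) (b : ℝ) (hb : 1 < b) :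
    ∃ A > 0, ∀ (Ω₁ : Set (E m)), IsOpen Ω₁ → IsBounded Ω₁ →
      ∀ R : ℝ, 0 < R →
      ∀ u : E m × E 2 → ℝ,
        ContDiff ℝ 1 u → HasCompactSupport u →
        tsupport u ⊆ Ω₁ ×ˢ ball (0 : E 2) R →
        (∀ (x₁ : E m) (x₂ y₂ : E 2), ‖x₂‖ = ‖y₂‖ → u (x₁, x₂) = u (x₁, y₂)) →
        ∀ (x₁ : E m) (x₂ : E 2), (x₁, x₂) ∈ Ω₁ ×ˢ ball (0 : E 2) R → x₂ ≠ 0 →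
          |u (x₁, x₂)| ^ b ≤ b * A / ‖x₂‖ ^ ((2 : ℝ) - 1) *
            ∫ y in ball (0 : E 2) R, |u (x₁, y)| ^ (b - 1) * ‖fderiv ℝ u (x₁, y)‖ := by

  have hvol : 0 < (volume (ball (0 : E 2) 1)).toReal :=
    ENNReal.toReal_pos (measure_ball_pos volume 0 one_pos).ne' measure_ball_lt_top.ne
  set c : ℝ := 2 * (volume (ball (0 : E 2) 1)).toReal with hc
  have hcpos : 0 < c := by positivity
  refine ⟨c⁻¹, inv_pos.2 hcpos, ?_⟩
  intro Ω₁ hΩ₁ hΩb R hR u hu hcs hsupp hrad x₁ x₂ hmem hx₂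
  have hb0 : (0:ℝ) < b := by linarith
  set r := ‖x₂‖ with hrdef
  have hr : 0 < r := norm_pos_iff.2 hx₂
  have hrR : r < R := by simpa [mem_ball, dist_zero_right] using hmem.2
  set e₀ : E 2 := EuclideanSpace.single 0 1 with he₀def
  have he₀ : ‖e₀‖ = 1 := by simp [he₀def]
  have hnorm_smul : ∀ s : ℝ, ‖s • e₀‖ = |s| := fun s => by
    rw [norm_smul, he₀, Real.norm_eq_abs, mul_one]
  set γ : ℝ → E m × E 2 := fun s => (x₁, s • e₀) with hγ
  have hγc : ContDiff ℝ 1 γ := contDiff_const.prodMk (contDiff_id.smul contDiff_const)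
  set g : ℝ → ℝ := fun s => u (γ s) with hg
  have hgc : ContDiff ℝ 1 g := hu.comp hγc
  -- vanishing outside the ball
  have hzero2 : ∀ y : E 2, ¬ ‖y‖ < R → u (x₁, y) = 0 ∧ fderiv ℝ u (x₁, y) = 0 := by
    intro y hy
    have hz' : (x₁, y) ∉ tsupport u := by
      intro h
      exact hy (by simpa [mem_ball, dist_zero_right] using (hsupp h).2)
    constructor
    · exact image_eq_zero_of_notMem_tsupport hz'
    · exact Function.notMem_support.mp (fun h => hz' (support_fderiv_subset ℝ h))
  -- derivative of g
  have hgd : ∀ s : ℝ, HasDerivAt g (fderiv ℝ u (γ s) (0, e₀)) s := by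
    intro s
    have h1 : HasDerivAt (fun s : ℝ => s • e₀) e₀ s := by
      simpa using (hasDerivAt_id s).smul_const e₀
    have hγd : HasDerivAt γ (0, e₀) s := (hasDerivAt_const s x₁).prodMk h1
    exact ((hu.differentiable one_ne_zero (γ s)).hasFDerivAt.comp_hasDerivAt s hγd)
  set g' : ℝ → ℝ := fun s => fderiv ℝ u (γ s) (0, e₀) with hg'def
  have hg'cont : Continuous g' :=
    ((hu.continuous_fderiv one_ne_zero).comp hγc.continuous).clm_apply continuous_const
  have hg'le : ∀ s, |g' s| ≤ ‖fderiv ℝ u (γ s)‖ := by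
    intro s
    have h := (fderiv ℝ u (γ s)).le_opNorm ((0 : E m), e₀)
    have hn : ‖((0 : E m), e₀)‖ = 1 := by simp [Prod.norm_def, he₀]
    rw [hn, mul_one] at h
    simpa [Real.norm_eq_abs] using h
  -- φ and FTC
  set φ : ℝ → ℝ := fun s => |g s| ^ b with hφ
  have hφd : ∀ s, HasDerivAt φ ((b * |g s| ^ (b - 2) * g s) * g' s) s :=
    fun s => (hasDerivAt_abs_rpow (g s) hb).comp s (hgd s)
  have hφc : ContDiff ℝ 1 φ := by
    have h := (contDiff_norm_rpow (E := ℝ) hb).comp hgc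
    simp only [Real.norm_eq_abs] at h
    exact h
  have hφ'cont : Continuous (fun s => (b * |g s| ^ (b - 2) * g s) * g' s) := by
    have h : (fun s => (b * |g s| ^ (b - 2) * g s) * g' s) = deriv φ := by
      funext s; exact ((hφd s).deriv).symm
    rw [h]
    exact hφc.continuous_deriv le_rfl
  have hgR : g R = 0 := by
    refine (hzero2 (R • e₀) ?_).1
    rw [hnorm_smul, abs_of_pos hR]
    exact lt_irrefl R
  have hFTC : ∫ s in r..R, (b * |g s| ^ (b - 2) * g s) * g' s = φ R - φ r :=
    intervalIntegral.integral_eq_sub_of_hasDerivAt (fun s _ => hφd s)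
      (hφ'cont.intervalIntegrable r R)
  have hφR : φ R = 0 := by
    rw [hφ]
    simp only [hgR, abs_zero]
    exact Real.zero_rpow (by linarith)
  -- the radial profile f
  set f : ℝ → ℝ := fun s => |g s| ^ (b - 1) * ‖fderiv ℝ u (γ s)‖ with hfdef
  have hfnn : ∀ s, 0 ≤ f s :=
    fun s => mul_nonneg (Real.rpow_nonneg (abs_nonneg _) _) (norm_nonneg _)
  have hfcont : Continuous f :=
    ((hgc.continuous.abs).rpow_const (fun s => Or.inr (by linarith))).mul
      ((hu.continuous_fderiv one_ne_zero).comp hγc.continuous).norm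
  -- step 1
  have step1 : φ r ≤ ∫ s in r..R, b * f s := by
    have h1 : φ r = -(∫ s in r..R, (b * |g s| ^ (b - 2) * g s) * g' s) := by
      rw [hFTC, hφR]; ring
    have h2 := intervalIntegral.abs_integral_le_integral_abs (μ := volume)
      (f := fun s => (b * |g s| ^ (b - 2) * g s) * g' s) hrR.le
    have h3 : (∫ s in r..R, |(b * |g s| ^ (b - 2) * g s) * g' s|) ≤ ∫ s in r..R, b * f s := by
      apply intervalIntegral.integral_mono_on hrR.le (hφ'cont.abs.intervalIntegrable r R)
        ((continuous_const.mul hfcont).intervalIntegrable r R)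
      intro s hs
      rw [abs_mul, abs_D_eq hb]
      have hb1 : b * |g s| ^ (b - 1) * |g' s| ≤ b * |g s| ^ (b - 1) * ‖fderiv ℝ u (γ s)‖ := by
        have hnn : 0 ≤ b * |g s| ^ (b - 1) := by positivity
        exact mul_le_mul_of_nonneg_left (hg'le s) hnn
      calc b * |g s| ^ (b - 1) * |g' s| ≤ b * |g s| ^ (b - 1) * ‖fderiv ℝ u (γ s)‖ := hb1
        _ = b * f s := by rw [hfdef]; ring
    calc φ r = -(∫ s in r..R, (b * |g s| ^ (b - 2) * g s) * g' s) := h1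
      _ ≤ |∫ s in r..R, (b * |g s| ^ (b - 2) * g s) * g' s| := neg_le_abs _
      _ ≤ ∫ s in r..R, |(b * |g s| ^ (b - 2) * g s) * g' s| := h2
      _ ≤ ∫ s in r..R, b * f s := h3
  -- step 2
  have step2 : (∫ s in r..R, b * f s) ≤ (b / r) * ∫ s in r..R, s * f s := by
    rw [← intervalIntegral.integral_const_mul]
    apply intervalIntegral.integral_mono_on hrR.le
      ((continuous_const.mul hfcont).intervalIntegrable r R)
      ((continuous_const.mul (continuous_id.mul hfcont)).intervalIntegrable r R)
    intro s hs
    simp only [Pi.mul_apply, id_eq]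
    rw [div_mul_eq_mul_div, le_div_iff₀ hr]
    have h1 : b * (f s * r) ≤ b * (s * f s) := by
      apply mul_le_mul_of_nonneg_left _ hb0.le
      calc f s * r ≤ f s * s := mul_le_mul_of_nonneg_left hs.1 (hfnn s)
        _ = s * f s := mul_comm _ _
    linarith
  -- step 3
  have hsf_cs : HasCompactSupport (fun s : ℝ => s * f s) := by
    apply HasCompactSupport.intro (isCompact_Icc (a := -R) (b := R))
    intro s hs
    have hnot : ¬ ‖s • e₀‖ < R := by
      rw [hnorm_smul]
      simp only [mem_Icc, not_and_or, not_le] at hs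
      rcases hs with h | h
      · rw [abs_of_neg (by linarith)]; linarith
      · rw [abs_of_pos (by linarith)]; linarith
    have h2 := (hzero2 (s • e₀) hnot).2
    have : f s = 0 := by
      rw [hfdef]
      simp only [hγ]
      rw [h2]
      simp
    rw [this, mul_zero]
  have hsf_int : Integrable (fun s : ℝ => s * f s) :=
    (continuous_id.mul hfcont).integrable_of_hasCompactSupport hsf_cs
  have step3 : (∫ s in r..R, s * f s) ≤ ∫ s in Ioi (0:ℝ), s * f s := by
    rw [intervalIntegral.integral_of_le hrR.le]
    apply setIntegral_mono_set hsf_int.integrableOn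
    · refine (ae_restrict_iff' measurableSet_Ioi).2 (ae_of_all _ fun s hs => ?_)
      exact mul_nonneg (le_of_lt hs) (hfnn s)
    · exact HasSubset.Subset.eventuallyLE (fun s hs => hr.trans hs.1)
  -- step 4 : polar coordinates
  set F : E 2 → ℝ := fun y => |u (x₁, y)| ^ (b - 1) * ‖fderiv ℝ u (x₁, y)‖ with hFdef
  have hFrad : ∀ y : E 2, F y = f ‖y‖ := by
    intro y
    have h1 : ‖y‖ = ‖(‖y‖ : ℝ) • e₀‖ := by
      rw [hnorm_smul, abs_of_nonneg (norm_nonneg y)]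
    rw [hFdef, hfdef]
    simp only [hg, hγ]
    rw [hrad x₁ y ((‖y‖ : ℝ) • e₀) h1, norm_fderiv_radial m u hu hrad x₁ h1]
  have hFzero : ∀ y ∉ ball (0:E 2) R, F y = 0 := by
    intro y hy
    have hnot : ¬ ‖y‖ < R := by simpa [mem_ball, dist_zero_right] using hy
    rw [hFdef]
    simp [(hzero2 y hnot).2]
  have hpolar : (∫ y in ball (0:E 2) R, F y) = c * ∫ s in Ioi (0:ℝ), s * f s := by
    rw [setIntegral_eq_integral_of_forall_compl_eq_zero hFzero]
    rw [show (fun y => F y) = fun y => f ‖y‖ from funext hFrad]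
    rw [integral_fun_norm_addHaar (volume : Measure (E 2)) f]
    simp only [finrank_euclideanSpace_fin, nsmul_eq_mul, smul_eq_mul, Nat.cast_ofNat,
      pow_one]
    rw [hc]
    simp only [Nat.reduceSub, pow_one]
    rw [measureReal_def]
    ring
  have hI0 : 0 ≤ ∫ s in Ioi (0:ℝ), s * f s :=
    setIntegral_nonneg measurableSet_Ioi (fun s hs => mul_nonneg (le_of_lt hs) (hfnn s))
  -- assemble
  have hux : |u (x₁, x₂)| ^ b = φ r := by
    rw [hφ]
    simp only [hg, hγ]
    rw [hrad x₁ x₂ (r • e₀) (by rw [hnorm_smul, abs_of_pos hr])]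
  have hexp : r ^ ((2:ℝ) - 1) = r := by
    norm_num
  rw [hexp, hpolar, hux]
  calc φ r ≤ ∫ s in r..R, b * f s := step1
    _ ≤ (b / r) * ∫ s in r..R, s * f s := step2
    _ ≤ (b / r) * ∫ s in Ioi (0:ℝ), s * f s := by
        exact mul_le_mul_of_nonneg_left step3 (by positivity)
    _ = b * c⁻¹ / r * (c * ∫ s in Ioi (0:ℝ), s * f s) := by
        field_simp
end
end
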